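/- Assume lim_{ξ → +∞} (Σ_{k=1}^{T} F_k(ξ)) / ξ^p = 0, and that γ_k := liminf_{ξ → 0^+} F_k(ξ) / ξ^p > 0 for every k ∈ {1, ..., T}. Then for every real α > λ_{1,p} / (p · min_{k ∈ {1,...,T}} γ_k), there exists u ∈ H with u(k) > 0 for all k ∈ {1, ..., T} such that -(φ_p(u(k+1) - u(k)) - φ_p(u(k) - u(k-1))) = α f(k, u(k)) for all k ∈ {1, ..., T}. -/

import Mathlib

open Real Filter



lemma phiAux_nonneg {p : ℝ} (hp : 1 < p) {s : ℝ} (hs : 0 ≤ s) :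
    |s| ^ (p - 2) * s = s ^ (p - 1) := by
  rcases eq_or_lt_of_le hs with h | h
  · rw [← h, Real.zero_rpow (show p - 1 ≠ 0 by intro h'; linarith)]; simp
  · rw [abs_of_pos h]
    have := Real.rpow_add h (p - 2) 1
    rw [Real.rpow_one] at this
    rw [← this]; ring_nf

lemma phiAux_neg {p : ℝ} (s : ℝ) :
    |(-s)| ^ (p - 2) * (-s) = -(|s| ^ (p - 2) * s) := by
  rw [abs_neg]; ring

lemma strictMono_phiAux {p : ℝ} (hp : 1 < p) :
    StrictMono (fun s : ℝ => |s| ^ (p - 2) * s) := by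
  have h1 : (0:ℝ) < p - 1 := by linarith
  intro a b hab
  simp only
  rcases le_or_gt 0 a with ha | ha
  · rw [phiAux_nonneg hp ha, phiAux_nonneg hp (le_trans ha hab.le)]
    exact Real.rpow_lt_rpow ha hab h1
  · rcases le_or_gt 0 b with hb | hb
    · have hA : |a| ^ (p - 2) * a < 0 := by
        have : |a| ^ (p-2) * a = -((-a) ^ (p - 1)) := by
          rw [← phiAux_nonneg hp (by linarith : (0:ℝ) ≤ -a), abs_neg]; ring
        rw [this]
        simp only [neg_neg, Left.neg_neg_iff]
        exact Real.rpow_pos_of_pos (by linarith) _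
      have hB : 0 ≤ |b| ^ (p - 2) * b := by
        rw [phiAux_nonneg hp hb]; exact Real.rpow_nonneg hb _
      linarith
    · have ea : |a| ^ (p-2) * a = -((-a) ^ (p - 1)) := by
        rw [← phiAux_nonneg hp (by linarith : (0:ℝ) ≤ -a), abs_neg]; ring
      have eb : |b| ^ (p-2) * b = -((-b) ^ (p - 1)) := by
        rw [← phiAux_nonneg hp (by linarith : (0:ℝ) ≤ -b), abs_neg]; ring
      rw [ea, eb, neg_lt_neg_iff]
      exact Real.rpow_lt_rpow (by linarith) (by linarith) h1

noncomputable def extFun (T : ℕ) (v : Fin T → ℝ) (n : ℕ) : ℝ :=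
  if h : 1 ≤ n ∧ n - 1 < T then v ⟨n - 1, h.2⟩ else 0

noncomputable def ener (T : ℕ) (p α : ℝ) (G : ℕ → ℝ → ℝ) (u : ℕ → ℝ) : ℝ :=
  (1 / p) * ∑ k ∈ Finset.Icc 1 (T + 1), |u k - u (k - 1)| ^ p
    - α * ∑ k ∈ Finset.Icc 1 T, G k (u k)

lemma extFun_zero (T : ℕ) (v : Fin T → ℝ) : extFun T v 0 = 0 := by
  simp [extFun]

lemma extFun_top (T : ℕ) (v : Fin T → ℝ) : extFun T v (T + 1) = 0 := by
  have : ¬ (1 ≤ T + 1 ∧ T + 1 - 1 < T) := by omega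
  simp [extFun, this]

lemma extFun_mem (T : ℕ) (v : Fin T → ℝ) (n : ℕ) (h1 : 1 ≤ n) (h2 : n ≤ T) :
    extFun T v n = v ⟨n - 1, by omega⟩ := by
  have h : 1 ≤ n ∧ n - 1 < T := by omega
  simp [extFun, h]

lemma continuous_extFun (T : ℕ) (n : ℕ) : Continuous (fun v : Fin T → ℝ => extFun T v n) := by
  unfold extFun
  by_cases h : 1 ≤ n ∧ n - 1 < T
  · simp only [dif_pos h]; exact continuous_apply _
  · simp only [dif_neg h]; exact continuous_const

lemma continuous_ener (T : ℕ) (p α : ℝ) (hp : 1 < p) (G : ℕ → ℝ → ℝ)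
    (hG : ∀ k ∈ Finset.Icc 1 T, Continuous (G k)) :
    Continuous (fun v : Fin T → ℝ => ener T p α G (extFun T v)) := by
  have habs : Continuous (fun x : ℝ => |x| ^ p) :=
    (Real.continuous_rpow_const (by linarith)).comp continuous_abs
  unfold ener
  apply Continuous.sub
  · apply Continuous.mul continuous_const
    apply continuous_finset_sum
    intro k _
    exact habs.comp ((continuous_extFun T k).sub (continuous_extFun T (k - 1)))
  · apply Continuous.mul continuous_const
    apply continuous_finset_sum
    intro k hk
    exact (hG k hk).comp (continuous_extFun T k)

lemma extFun_perturb (T : ℕ) (v : Fin T → ℝ) (j : ℕ) (hj1 : 1 ≤ j) (hj2 : j ≤ T) (t : ℝ) :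
    extFun T (v + t • (Pi.single (⟨j - 1, by omega⟩ : Fin T) (1:ℝ) : Fin T → ℝ))
      = fun n => extFun T v n + if n = j then t else 0 := by
  funext n
  by_cases h : 1 ≤ n ∧ n - 1 < T
  · simp only [extFun, dif_pos h, Pi.add_apply, Pi.smul_apply, smul_eq_mul]
    rw [Pi.single_apply]
    by_cases hnj : n = j
    · have : (⟨n - 1, h.2⟩ : Fin T) = ⟨j - 1, by omega⟩ := by
        apply Fin.ext; simp [hnj]
      rw [if_pos this, if_pos hnj]; ring
    · have : (⟨n - 1, h.2⟩ : Fin T) ≠ ⟨j - 1, by omega⟩ := by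
        intro hc
        apply hnj
        have := Fin.mk.injEq (n-1) h.2 (j-1) (by omega : j - 1 < T) ▸ hc
        have h2 : n - 1 = j - 1 := by exact Fin.mk.inj_iff.mp hc
        omega
      rw [if_neg this, if_neg hnj]; ring
  · have hnj : n ≠ j := by omega
    simp only [extFun, dif_neg h, if_neg hnj]; ring

lemma ener_EL (T : ℕ) (p α : ℝ) (hp : 1 < p)
    (g G : ℕ → ℝ → ℝ)
    (hG' : ∀ k ∈ Finset.Icc 1 T, ∀ x : ℝ, HasDerivAt (G k) (g k x) x)
    (u : ℕ → ℝ) (j : ℕ) (hj : j ∈ Finset.Icc 1 T)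
    (hmin : ∀ t : ℝ, ener T p α G u ≤ ener T p α G (fun n => u n + if n = j then t else 0)) :
    |u j - u (j-1)| ^ (p-2) * (u j - u (j-1)) - |u (j+1) - u j| ^ (p-2) * (u (j+1) - u j)
      = α * g j (u j) := by
  have hj' := hj
  rw [Finset.mem_Icc] at hj'
  set X := |u j - u (j-1)| ^ (p-2) * (u j - u (j-1)) with hX
  set Y := |u (j+1) - u j| ^ (p-2) * (u (j+1) - u j) with hY
  set P : ℝ → ℕ → ℝ := fun t n => u n + if n = j then t else 0 with hP
  have hP0 : P 0 = u := by funext n; simp [hP]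
  set d1 : ℕ → ℝ := fun k =>
    (if k = j then p * X else 0) + (if k = j + 1 then -(p * Y) else 0) with hd1
  have hterm1 : ∀ k ∈ Finset.Icc 1 (T+1),
      HasDerivAt (fun t => |P t k - P t (k-1)| ^ p) (d1 k) 0 := by
    intro k hk
    rw [Finset.mem_Icc] at hk
    rcases eq_or_ne k j with hkj | hkj
    · have hne : k - 1 ≠ j := by omega
      have efun : (fun t => |P t k - P t (k-1)| ^ p)
          = fun t : ℝ => |(u k - u (k-1)) + t| ^ p := by
        funext t; simp only [hP]; rw [if_pos hkj, if_neg hne]; ring_nf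
      have inner : HasDerivAt (fun t : ℝ => (u k - u (k-1)) + t) 1 0 :=
        (hasDerivAt_id (0:ℝ)).const_add (u k - u (k-1))
      have comp := (hasDerivAt_abs_rpow ((u k - u (k-1)) + 0) hp).comp 0 inner
      rw [efun]
      refine comp.congr_deriv ?_; symm
      simp only [hd1]
      rw [if_pos hkj, if_neg (show k ≠ j + 1 by omega), hX, hkj]
      simp [mul_assoc]
    · rcases eq_or_ne k (j+1) with hkj2 | hkj2
      · have hkm : k - 1 = j := by omega
        have efun : (fun t => |P t k - P t (k-1)| ^ p)
            = fun t : ℝ => |(u k - u (k-1)) - t| ^ p := by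
          funext t; simp only [hP]; rw [if_neg hkj, if_pos hkm]; ring_nf
        have inner : HasDerivAt (fun t : ℝ => (u k - u (k-1)) - t) (-1) 0 :=
          (hasDerivAt_id (0:ℝ)).const_sub (u k - u (k-1))
        have comp := (hasDerivAt_abs_rpow ((u k - u (k-1)) - 0) hp).comp 0 inner
        rw [efun]
        refine comp.congr_deriv ?_; symm
        simp only [hd1]
        rw [if_neg hkj, if_pos hkj2, hY, hkm, hkj2]
        rw [sub_zero]
        show 0 + -(p * (|u (j + 1) - u j| ^ (p - 2) * (u (j + 1) - u j)))
          = p * |u (j + 1) - u j| ^ (p - 2) * (u (j + 1) - u j) * -1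
        ring
      · have hne : k - 1 ≠ j := by omega
        have efun : (fun t => |P t k - P t (k-1)| ^ p)
            = fun _ : ℝ => |u k - u (k-1)| ^ p := by
          funext t; simp only [hP]; rw [if_neg hkj, if_neg hne]; ring_nf
        rw [efun]
        have : d1 k = 0 := by simp only [hd1]; rw [if_neg hkj, if_neg hkj2]; ring
        rw [this]
        exact hasDerivAt_const 0 _
  have hjmem : j ∈ Finset.Icc 1 (T+1) := by rw [Finset.mem_Icc]; omega
  have hjmem2 : j + 1 ∈ Finset.Icc 1 (T+1) := by rw [Finset.mem_Icc]; omega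
  have hsum1 : HasDerivAt (fun t => ∑ k ∈ Finset.Icc 1 (T+1), |P t k - P t (k-1)| ^ p)
      (p * X - p * Y) 0 := by
    refine (HasDerivAt.fun_sum hterm1).congr_deriv ?_; symm
    simp only [hd1]
    rw [Finset.sum_add_distrib,
      Finset.sum_ite_eq' (Finset.Icc 1 (T+1)) j (fun _ => p * X),
      Finset.sum_ite_eq' (Finset.Icc 1 (T+1)) (j+1) (fun _ => -(p * Y)),
      if_pos hjmem, if_pos hjmem2]
    ring
  set d2 : ℕ → ℝ := fun k => if k = j then g j (u j) else 0 with hd2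
  have hterm2 : ∀ k ∈ Finset.Icc 1 T, HasDerivAt (fun t => G k (P t k)) (d2 k) 0 := by
    intro k hk
    rcases eq_or_ne k j with hkj | hkj
    · have efun : (fun t => G k (P t k)) = fun t : ℝ => G k (u k + t) := by
        funext t; simp only [hP]; rw [if_pos hkj]
      have inner : HasDerivAt (fun t : ℝ => u k + t) 1 0 :=
        (hasDerivAt_id (0:ℝ)).const_add (u k)
      have comp := (hG' k hk (u k + 0)).comp 0 inner
      rw [efun]
      refine comp.congr_deriv ?_; symm
      simp only [hd2]
      rw [if_pos hkj, hkj, add_zero, mul_one]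
    · have efun : (fun t => G k (P t k)) = fun _ : ℝ => G k (u k) := by
        funext t; simp only [hP]; rw [if_neg hkj, add_zero]
      rw [efun]
      have : d2 k = 0 := by simp only [hd2]; rw [if_neg hkj]
      rw [this]
      exact hasDerivAt_const 0 _
  have hsum2 : HasDerivAt (fun t => ∑ k ∈ Finset.Icc 1 T, G k (P t k)) (g j (u j)) 0 := by
    refine (HasDerivAt.fun_sum hterm2).congr_deriv ?_; symm
    simp only [hd2]
    rw [Finset.sum_ite_eq' (Finset.Icc 1 T) j (fun _ => g j (u j)), if_pos hj]
  have htot : HasDerivAt (fun t => ener T p α G (P t))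
      ((1/p) * (p * X - p * Y) - α * g j (u j)) 0 := by
    unfold ener
    exact (HasDerivAt.const_mul (1/p) hsum1).sub (HasDerivAt.const_mul α hsum2)
  have hloc : IsLocalMin (fun t => ener T p α G (P t)) 0 := by
    apply Filter.Eventually.of_forall
    intro t
    show ener T p α G (P 0) ≤ ener T p α G (P t)
    rw [hP0]
    exact hmin t
  have h0 := hloc.hasDerivAt_eq_zero htot
  have hpne : p ≠ 0 := by linarith
  have e : (1/p) * (p * X - p * Y) = X - Y := by field_simp
  rw [e] at h0
  linarith

lemma positivity_of_concave (T : ℕ) (u : ℕ → ℝ) (hu0 : u 0 = 0) (huT : u (T+1) = 0)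
    (hd : ∀ k, 1 ≤ k → k ≤ T → u (k+1) - u k ≤ u k - u (k-1))
    (hne : ¬ (∀ n, n ≤ T + 1 → u n = 0)) :
    ∀ k, 1 ≤ k → k ≤ T → 0 < u k := by
  have hnn : ∀ n, n ≤ T + 1 → 0 ≤ u n := by
    obtain ⟨m, hm_mem, hm⟩ := Finset.exists_min_image (Finset.Icc 0 (T+1)) u
      ⟨0, by simp⟩
    rw [Finset.mem_Icc] at hm_mem
    by_contra hcon
    push_neg at hcon
    obtain ⟨n₀, hn₀, hn₀'⟩ := hcon
    have hcneg : u m < 0 :=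
      lt_of_le_of_lt (hm n₀ (by rw [Finset.mem_Icc]; omega)) hn₀'
    have key : ∀ k, 1 ≤ k → k ≤ T → u k = u m → u (k-1) = u m := by
      intro k h1 h2 hk
      have h3 : u m ≤ u (k+1) := hm (k+1) (by rw [Finset.mem_Icc]; omega)
      have h4 : u m ≤ u (k-1) := hm (k-1) (by rw [Finset.mem_Icc]; omega)
      have h5 := hd k h1 h2
      exact le_antisymm (by linarith) h4
    have claim : ∀ j, u (m - j) = u m := by
      intro j
      induction j with
      | zero => rfl
      | succ i ih =>
        rcases Nat.eq_zero_or_pos (m - i) with h0 | hpos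
        · have e : m - (i+1) = 0 := by omega
          rw [e]; rw [h0] at ih; exact ih
        · have hle : m - i ≤ T := by
            by_contra hgt
            have e : m - i = T + 1 := by omega
            rw [e, huT] at ih
            linarith
          have hstep := key (m - i) hpos hle ih
          have e : m - (i+1) = (m - i) - 1 := by omega
          rw [e]; exact hstep
    have h0m := claim m
    rw [Nat.sub_self, hu0] at h0m
    linarith
  intro k hk1 hk2
  by_contra hcon
  push_neg at hcon
  have hk0 : u k = 0 := le_antisymm hcon (hnn k (by omega))
  have key2 : ∀ k, 1 ≤ k → k ≤ T → u k = 0 → u (k-1) = 0 ∧ u (k+1) = 0 := by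
    intro k h1 h2 hk
    have h3 : 0 ≤ u (k+1) := hnn (k+1) (by omega)
    have h4 : 0 ≤ u (k-1) := hnn (k-1) (by omega)
    have h5 := hd k h1 h2
    constructor <;> linarith
  have left : ∀ j, u (k - j) = 0 := by
    intro j
    induction j with
    | zero => exact hk0
    | succ i ih =>
      rcases Nat.eq_zero_or_pos (k - i) with h0 | hpos
      · have e : k - (i+1) = 0 := by omega
        rw [e]; exact hu0
      · have hstep := (key2 (k - i) hpos (by omega) ih).1
        have e : k - (i+1) = (k - i) - 1 := by omega
        rw [e]; exact hstep
  have right : ∀ j, k + j ≤ T + 1 → u (k + j) = 0 := by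
    intro j
    induction j with
    | zero => intro _; exact hk0
    | succ i ih =>
      intro hle
      have hstep := (key2 (k + i) (by omega) (by omega) (ih (by omega))).2
      have e : k + (i+1) = (k + i) + 1 := by omega
      rw [e]; exact hstep
  apply hne
  intro n hn
  rcases le_or_gt n k with h | h
  · have := left (k - n)
    rwa [show k - (k - n) = n by omega] at this
  · have := right (n - k) (by omega)
    rwa [show k + (n - k) = n by omega] at this

set_option maxHeartbeats 2000000 in
/-- Theorem `Esistenza2`. Let `T ≥ 2`, `p > 1`,
`f : ℤ[1,T] × [0,∞) → [0,∞)` continuous, `F k ξ = ∫_0^ξ f(k,s) ds`, and let `λ₁` be the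
first eigenvalue of the discrete `p`-Laplacian, i.e. the minimum of the Rayleigh quotient
over nonzero `u ∈ H`.  Assume `(∑_{k=1}^T F k ξ)/ξ^p → 0` as `ξ → +∞` and that
`γ k := liminf_{ξ → 0⁺} F k ξ / ξ^p > 0` for every `k ∈ ℤ[1,T]`.  Then for every
`α > λ₁ / (p · min_k γ k)` the problem `(D^f_α)` has at least one positive solution. -/
theorem discrete_pLaplacian_parametric_existence
    (T : ℕ) (hT : 2 ≤ T) (p : ℝ) (hp : 1 < p)
    (f : ℕ → ℝ → ℝ)
    (hf_cont : ∀ k ∈ Finset.Icc 1 T, ContinuousOn (f k) (Set.Ici 0))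
    (hf_nonneg : ∀ k ∈ Finset.Icc 1 T, ∀ ξ : ℝ, 0 ≤ ξ → 0 ≤ f k ξ)
    (φ : ℝ → ℝ) (hφ : ∀ s : ℝ, φ s = |s| ^ (p - 2) * s)
    (F : ℕ → ℝ → ℝ) (hF : ∀ k : ℕ, ∀ ξ : ℝ, F k ξ = ∫ s in (0:ℝ)..ξ, f k s)
    (lam : ℝ)
    (hlam : IsLeast
      {r : ℝ | ∃ u : ℕ → ℝ, u 0 = 0 ∧ u (T + 1) = 0 ∧ (∃ k ∈ Finset.Icc 1 T, u k ≠ 0) ∧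
        r = (∑ k ∈ Finset.Icc 1 (T + 1), |u k - u (k - 1)| ^ p) /
            (∑ k ∈ Finset.Icc 1 T, |u k| ^ p)} lam)
    (γ : ℕ → ℝ)
    (hγ : ∀ k ∈ Finset.Icc 1 T,
      γ k = Filter.liminf (fun ξ : ℝ => F k ξ / ξ ^ p) (nhdsWithin 0 (Set.Ioi 0)))
    (hγpos : ∀ k ∈ Finset.Icc 1 T, 0 < γ k)
    (hlim : Filter.Tendsto (fun ξ : ℝ => (∑ k ∈ Finset.Icc 1 T, F k ξ) / ξ ^ p)
      Filter.atTop (nhds 0))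
    (α : ℝ)
    (hα : lam / (p * ((Finset.Icc 1 T).inf' (Finset.nonempty_Icc.mpr (by omega)) γ)) < α) :
    ∃ u : ℕ → ℝ, u 0 = 0 ∧ u (T + 1) = 0 ∧
      (∀ k ∈ Finset.Icc 1 T, 0 < u k) ∧
      (∀ k ∈ Finset.Icc 1 T,
        -(φ (u (k + 1) - u k) - φ (u k - u (k - 1))) = α * f k (u k)) := by
    classical
  have hp0 : (0:ℝ) < p := by linarith
  have hpne : p ≠ 0 := by linarith
  have hne : (Finset.Icc 1 T).Nonempty := Finset.nonempty_Icc.mpr (by omega)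
  set m := (Finset.Icc 1 T).inf' hne γ with hm_def
  have hα' : lam / (p * m) < α := hα
  obtain ⟨kγ, hkγ_mem, hkγ⟩ := Finset.exists_mem_eq_inf' hne γ
  have hm_pos : 0 < m := by rw [hm_def, hkγ]; exact hγpos kγ hkγ_mem
  have hm_le : ∀ k ∈ Finset.Icc 1 T, m ≤ γ k := fun k hk => Finset.inf'_le γ hk
  -- the truncated nonlinearity and its primitive
  set g : ℕ → ℝ → ℝ := fun k s => f k (max s 0) with hgdef
  have hgcont : ∀ k ∈ Finset.Icc 1 T, Continuous (g k) := by
    intro k hk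
    exact (hf_cont k hk).comp_continuous (continuous_id.max continuous_const)
      (fun x => Set.mem_Ici.mpr (le_max_right x 0))
  have hgnn : ∀ k ∈ Finset.Icc 1 T, ∀ s : ℝ, 0 ≤ g k s :=
    fun k hk s => hf_nonneg k hk _ (le_max_right s 0)
  set G : ℕ → ℝ → ℝ := fun k ξ => ∫ s in (0:ℝ)..ξ, g k s with hGdef
  have hG' : ∀ k ∈ Finset.Icc 1 T, ∀ x : ℝ, HasDerivAt (G k) (g k x) x := fun k hk x =>
    ((hgcont k hk).integral_hasStrictDerivAt 0 x).hasDerivAt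
  have hGcont : ∀ k ∈ Finset.Icc 1 T, Continuous (G k) := fun k hk =>
    continuous_iff_continuousAt.mpr fun x => (hG' k hk x).continuousAt
  have hG0 : ∀ k, G k 0 = 0 := fun k => intervalIntegral.integral_same
  have hGF : ∀ k ∈ Finset.Icc 1 T, ∀ ξ : ℝ, 0 ≤ ξ → G k ξ = F k ξ := by
    intro k hk ξ hξ
    rw [hF]
    apply intervalIntegral.integral_congr
    intro s hs
    rw [Set.uIcc_of_le hξ] at hs
    simp only [hgdef]
    rw [max_eq_left hs.1]
  have hGnonneg : ∀ k ∈ Finset.Icc 1 T, ∀ ξ : ℝ, 0 ≤ ξ → 0 ≤ G k ξ := by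
    intro k hk ξ hξ
    exact intervalIntegral.integral_nonneg hξ (fun s _ => hgnn k hk s)
  have hGneg : ∀ k ∈ Finset.Icc 1 T, ∀ ξ : ℝ, ξ ≤ 0 → G k ξ ≤ 0 := by
    intro k hk ξ hξ
    have : G k ξ = -(∫ s in ξ..(0:ℝ), g k s) := by
      simp only [hGdef]; rw [intervalIntegral.integral_symm]
    rw [this, neg_nonpos]
    exact intervalIntegral.integral_nonneg hξ (fun s _ => hgnn k hk s)
  have hFnn : ∀ k ∈ Finset.Icc 1 T, ∀ ξ : ℝ, 0 ≤ ξ → 0 ≤ F k ξ :=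
    fun k hk ξ hξ => (hGF k hk ξ hξ) ▸ hGnonneg k hk ξ hξ
  -- eigenfunction facts
  obtain ⟨w, hw0, hwT, ⟨k₀, hk₀mem, hwk₀⟩, hwr⟩ := hlam.1
  set Dw := ∑ k ∈ Finset.Icc 1 T, |w k| ^ p with hDw
  set Nw := ∑ k ∈ Finset.Icc 1 (T+1), |w k - w (k-1)| ^ p with hNw
  have hDw_pos : 0 < Dw := Finset.sum_pos'
    (fun k _ => Real.rpow_nonneg (abs_nonneg _) p)
    ⟨k₀, hk₀mem, Real.rpow_pos_of_pos (abs_pos.mpr hwk₀) p⟩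
  have hNw_nonneg : 0 ≤ Nw := Finset.sum_nonneg fun k _ => Real.rpow_nonneg (abs_nonneg _) p
  have hNw_pos : 0 < Nw := by
    rcases lt_or_ge 0 Nw with h | h
    · exact h
    exfalso
    have hNw0 : Nw = 0 := le_antisymm h hNw_nonneg
    have hzero : ∀ k ∈ Finset.Icc 1 (T+1), |w k - w (k-1)| ^ p = 0 :=
      (Finset.sum_eq_zero_iff_of_nonneg
        (fun k _ => Real.rpow_nonneg (abs_nonneg _) p)).mp (hNw ▸ hNw0)
    have hconst : ∀ k, k ≤ T + 1 → w k = 0 := by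
      intro k hk
      induction k with
      | zero => exact hw0
      | succ i ih =>
        have h1 := hzero (i+1) (by rw [Finset.mem_Icc]; omega)
        have h2 : |w (i+1) - w (i+1-1)| = 0 :=
          ((Real.rpow_eq_zero_iff_of_nonneg (abs_nonneg _)).mp h1).1
        have h3 : w (i+1) = w i := by
          have : i + 1 - 1 = i := by omega
          rw [this] at h2
          have := abs_eq_zero.mp h2
          linarith
        rw [h3]; exact ih (by omega)
    exact hwk₀ (hconst k₀ (by have := Finset.mem_Icc.mp hk₀mem; omega))
  have hlam_pos : 0 < lam := by rw [hwr]; exact div_pos hNw_pos hDw_pos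
  have hNwD : Nw = lam * Dw := by rw [hwr]; field_simp
  have hα0 : 0 < α := lt_trans (div_pos hlam_pos (by positivity)) hα'
  -- Rayleigh lower bound
  have hRay : ∀ u : ℕ → ℝ, u 0 = 0 → u (T+1) = 0 →
      lam * (∑ k ∈ Finset.Icc 1 T, |u k| ^ p)
        ≤ ∑ k ∈ Finset.Icc 1 (T+1), |u k - u (k-1)| ^ p := by
    intro u h0 hT1
    by_cases hz : ∃ k ∈ Finset.Icc 1 T, u k ≠ 0
    · have hge := hlam.2 ⟨u, h0, hT1, hz, rfl⟩
      obtain ⟨k, hk, hk0⟩ := hz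
      have hD : 0 < ∑ k ∈ Finset.Icc 1 T, |u k| ^ p := Finset.sum_pos'
        (fun j _ => Real.rpow_nonneg (abs_nonneg _) p)
        ⟨k, hk, Real.rpow_pos_of_pos (abs_pos.mpr hk0) p⟩
      rw [le_div_iff₀ hD] at hge
      linarith
    · push_neg at hz
      have hD0 : (∑ k ∈ Finset.Icc 1 T, |u k| ^ p) = 0 :=
        Finset.sum_eq_zero fun k hk => by rw [hz k hk]; simp [Real.zero_rpow hpne]
      rw [hD0, mul_zero]
      exact Finset.sum_nonneg fun k _ => Real.rpow_nonneg (abs_nonneg _) p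
  -- the constant C for coercivity
  set ε := lam / (2 * p * α) with hε
  have hε_pos : 0 < ε := by rw [hε]; positivity
  have hev : ∀ᶠ ξ in Filter.atTop, (∑ k ∈ Finset.Icc 1 T, F k ξ) / ξ ^ p < ε :=
    hlim.eventually_lt_const hε_pos
  obtain ⟨M₀, hM₀⟩ := Filter.eventually_atTop.mp hev
  set M := max M₀ 1 with hM
  have hM1 : (1:ℝ) ≤ M := le_max_right _ _
  have hMbound : ∀ ξ : ℝ, M ≤ ξ → (∑ k ∈ Finset.Icc 1 T, F k ξ) ≤ ε * ξ ^ p := by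
    intro ξ hξ
    have hξ0 : (0:ℝ) < ξ := by linarith
    have hξp : 0 < ξ ^ p := Real.rpow_pos_of_pos hξ0 p
    have := hM₀ ξ (le_trans (le_max_left _ _) hξ)
    rw [div_lt_iff₀ hξp] at this
    linarith
  have hFcont : ContinuousOn (fun ξ => ∑ k ∈ Finset.Icc 1 T, F k ξ) (Set.Icc 0 M) := by
    apply ContinuousOn.congr
      ((continuous_finset_sum _ (fun k hk => hGcont k hk)).continuousOn
        (s := Set.Icc 0 M))
    intro ξ hξ
    exact Finset.sum_congr rfl fun k hk => ((hGF k hk ξ hξ.1)).symm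
  obtain ⟨ξs, hξs_mem, hξs⟩ := isCompact_Icc.exists_isMaxOn
    ⟨0, Set.mem_Icc.mpr ⟨le_refl 0, by linarith⟩⟩ hFcont
  set C := max (∑ k ∈ Finset.Icc 1 T, F k ξs) 0 with hC
  have hC0 : 0 ≤ C := le_max_right _ _
  have hCb : ∀ s : ℝ, ∀ k ∈ Finset.Icc 1 T, G k s ≤ ε * |s| ^ p + C := by
    intro s k hk
    have hεs : 0 ≤ ε * |s| ^ p :=
      mul_nonneg hε_pos.le (Real.rpow_nonneg (abs_nonneg _) p)
    rcases le_or_gt s 0 with hs | hs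
    · have := hGneg k hk s hs
      linarith
    · rw [hGF k hk s hs.le]
      have h1 : F k s ≤ ∑ j ∈ Finset.Icc 1 T, F j s :=
        Finset.single_le_sum (fun j hj => hFnn j hj s hs.le) hk
      rcases le_or_gt M s with hMs | hMs
      · have h2 := hMbound s hMs
        rw [abs_of_pos hs]
        linarith
      · have h2 := hξs (Set.mem_Icc.mpr ⟨hs.le, hMs.le⟩)
        have h3 : F k s ≤ C := le_trans h1 (le_trans h2 (le_max_left _ _))
        linarith
  -- the energy functional on Fin T → ℝ
  set J : (Fin T → ℝ) → ℝ := fun v => ener T p α G (extFun T v) with hJ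
  have hJcont : Continuous J := continuous_ener T p α hp G hGcont
  have hext0 : ∀ n, extFun T (0 : Fin T → ℝ) n = 0 := by
    intro n; unfold extFun; split <;> simp
  have hJ0 : J 0 = 0 := by
    have h1 : ∑ k ∈ Finset.Icc 1 (T+1), |extFun T (0 : Fin T → ℝ) k
        - extFun T (0 : Fin T → ℝ) (k-1)| ^ p = 0 := by
      apply Finset.sum_eq_zero
      intro k _
      rw [hext0 k, hext0 (k-1)]
      simp [Real.zero_rpow hpne]
    have h2 : ∑ k ∈ Finset.Icc 1 T, G k (extFun T (0 : Fin T → ℝ) k) = 0 := by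
      apply Finset.sum_eq_zero
      intro k _
      rw [hext0 k]
      exact hG0 k
    simp only [hJ]
    unfold ener
    rw [h1, h2]
    simp
  -- norm bound
  have hvD : ∀ v : Fin T → ℝ, ‖v‖ ^ p ≤ ∑ k ∈ Finset.Icc 1 T, |extFun T v k| ^ p := by
    intro v
    set D := ∑ k ∈ Finset.Icc 1 T, |extFun T v k| ^ p with hD
    have hsum_eq : D = ∑ i : Fin T, |v i| ^ p := by
      rw [hD, ← Finset.Ico_add_one_right_eq_Icc, Finset.sum_Ico_eq_sum_range]
      simp only [Nat.add_sub_cancel]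
      rw [← Fin.sum_univ_eq_sum_range (fun i => |extFun T v (1 + i)| ^ p) T]
      apply Finset.sum_congr rfl
      intro i _
      rw [extFun_mem T v (1 + (i:ℕ)) (by omega) (by omega)]
      exact congrArg (fun x : Fin T => |v x| ^ p) (Fin.ext (by simp))
    have hD_nonneg : 0 ≤ D := Finset.sum_nonneg fun k _ => Real.rpow_nonneg (abs_nonneg _) p
    have hri : ∀ i : Fin T, ‖v i‖ ≤ D ^ (1/p) := by
      intro i
      have h1 : |v i| ^ p ≤ D := by
        rw [hsum_eq]
        exact Finset.single_le_sum (fun j _ => Real.rpow_nonneg (abs_nonneg _) p)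
          (Finset.mem_univ i)
      have h2 : (|v i| ^ p) ^ (1/p) ≤ D ^ (1/p) :=
        Real.rpow_le_rpow (Real.rpow_nonneg (abs_nonneg _) p) h1 (by positivity)
      rwa [← Real.rpow_mul (abs_nonneg _), mul_one_div_cancel hpne, Real.rpow_one] at h2
    have hnorm : ‖v‖ ≤ D ^ (1/p) :=
      (pi_norm_le_iff_of_nonneg (Real.rpow_nonneg hD_nonneg _)).mpr hri
    calc ‖v‖ ^ p ≤ (D ^ (1/p)) ^ p :=
          Real.rpow_le_rpow (norm_nonneg v) hnorm hp0.le
      _ = D := by rw [← Real.rpow_mul hD_nonneg, one_div_mul_cancel hpne, Real.rpow_one]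
  -- coercive bound
  have hbound : ∀ v : Fin T → ℝ, lam / (2*p) * ‖v‖ ^ p - α * (T * C) ≤ J v := by
    intro v
    set u := extFun T v with hu
    set N := ∑ k ∈ Finset.Icc 1 (T+1), |u k - u (k-1)| ^ p with hN
    set D := ∑ k ∈ Finset.Icc 1 T, |u k| ^ p with hD
    have hN0 : 0 ≤ N := Finset.sum_nonneg fun k _ => Real.rpow_nonneg (abs_nonneg _) p
    have hDN : lam * D ≤ N := hRay u (extFun_zero T v) (extFun_top T v)
    have hGsum : ∑ k ∈ Finset.Icc 1 T, G k (u k) ≤ ε * D + T * C := by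
      calc ∑ k ∈ Finset.Icc 1 T, G k (u k)
          ≤ ∑ k ∈ Finset.Icc 1 T, (ε * |u k| ^ p + C) :=
            Finset.sum_le_sum fun k hk => hCb (u k) k hk
        _ = ε * D + T * C := by
            rw [Finset.sum_add_distrib, ← Finset.mul_sum, Finset.sum_const, Nat.card_Icc]
            simp only [Nat.add_sub_cancel, nsmul_eq_mul]
            rw [hD]
    have hJv : J v = (1/p) * N - α * (∑ k ∈ Finset.Icc 1 T, G k (u k)) := by
      simp only [hJ]
      unfold ener
      rw [← hu, ← hN]
    set q := 1 / (2*p) with hq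
    have hq0 : 0 ≤ q := by positivity
    have ha1 : α * (∑ k ∈ Finset.Icc 1 T, G k (u k)) ≤ q * (lam * D) + α * (T * C) := by
      have h1 : α * (∑ k ∈ Finset.Icc 1 T, G k (u k)) ≤ α * (ε * D + T * C) :=
        mul_le_mul_of_nonneg_left hGsum hα0.le
      have h2 : α * (ε * D + T * C) = q * (lam * D) + α * (T * C) := by
        rw [hε, hq]; field_simp
      linarith
    have ha2 : q * (lam * D) ≤ q * N := mul_le_mul_of_nonneg_left hDN hq0
    have ha3 : q * (lam * ‖v‖ ^ p) ≤ q * (lam * D) :=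
      mul_le_mul_of_nonneg_left (mul_le_mul_of_nonneg_left (hvD v) hlam_pos.le) hq0
    have ha4 : lam / (2*p) * ‖v‖ ^ p = q * (lam * ‖v‖ ^ p) := by rw [hq]; ring
    have ha5 : (1:ℝ)/p = 2 * q := by rw [hq]; field_simp
    rw [hJv, ha4, ha5]
    linarith
  -- minimizer exists
  set K := α * (T * C) with hK
  have hK0 : 0 ≤ K := by positivity
  set R := max 1 ((2*p*K/lam) ^ (1/p)) with hR
  have hRbound : ∀ v : Fin T → ℝ, R ≤ ‖v‖ → 0 ≤ J v := by
    intro v hv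
    have h1 : (2*p*K/lam) ^ (1/p) ≤ ‖v‖ := le_trans (le_max_right _ _) hv
    have hbase : 0 ≤ 2*p*K/lam := by positivity
    have h2 : 2*p*K/lam ≤ ‖v‖ ^ p := by
      calc 2*p*K/lam = ((2*p*K/lam) ^ (1/p)) ^ p := by
            rw [← Real.rpow_mul hbase, one_div_mul_cancel hpne, Real.rpow_one]
        _ ≤ ‖v‖ ^ p := Real.rpow_le_rpow (Real.rpow_nonneg hbase _) h1 hp0.le
    have h3 : K ≤ lam / (2*p) * ‖v‖ ^ p := by
      rw [div_mul_eq_mul_div, le_div_iff₀ (by positivity : (0:ℝ) < 2*p)]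
      have h4 := (div_le_iff₀ hlam_pos).mp h2
      nlinarith
    linarith [hbound v]
  have hcoc : ∀ᶠ v in Filter.cocompact (Fin T → ℝ), J 0 ≤ J v := by
    rw [← Metric.cobounded_eq_cocompact]
    filter_upwards [tendsto_norm_cobounded_atTop.eventually_ge_atTop R] with v hv
    rw [hJ0]
    exact hRbound v hv
  obtain ⟨v₀, hv₀⟩ := hJcont.exists_forall_le' 0 hcoc
  -- negative test value
  have hlamα : lam / (p*α) < m := by
    rw [div_lt_iff₀ (by positivity)]
    rw [div_lt_iff₀ (by positivity : 0 < p * m)] at hα'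
    nlinarith
  set εγ := (m - lam/(p*α))/2 with hεγ
  have hεγ_pos : 0 < εγ := by rw [hεγ]; linarith
  have hkey : lam/p - α*(m - εγ) < 0 := by
    have h1 : lam/(p*α) < m - εγ := by rw [hεγ]; linarith
    rw [div_lt_iff₀ (by positivity : 0 < p*α)] at h1
    rw [sub_neg, div_lt_iff₀ hp0]
    nlinarith
  have hev2 : ∀ᶠ ξ in nhdsWithin (0:ℝ) (Set.Ioi 0),
      ∀ k ∈ Finset.Icc 1 T, (γ k - εγ) * ξ ^ p ≤ F k ξ := by
    rw [Filter.eventually_all_finset]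
    intro k hk
    have hbd : Filter.IsBoundedUnder (· ≥ ·) (nhdsWithin (0:ℝ) (Set.Ioi 0))
        (fun ξ => F k ξ / ξ ^ p) := by
      refine ⟨0, ?_⟩
      rw [Filter.eventually_map]
      filter_upwards [self_mem_nhdsWithin] with ξ hξ
      have hξ0 : (0:ℝ) < ξ := hξ
      exact div_nonneg (hFnn k hk ξ hξ0.le) (Real.rpow_nonneg hξ0.le p)
    have hlt : γ k - εγ < Filter.liminf (fun ξ => F k ξ / ξ ^ p)
        (nhdsWithin (0:ℝ) (Set.Ioi 0)) := by
      rw [← hγ k hk]; linarith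
    filter_upwards [Filter.eventually_lt_of_lt_liminf hlt hbd, self_mem_nhdsWithin]
      with ξ h1 h2
    have hξ0 : (0:ℝ) < ξ := h2
    have hξp : 0 < ξ ^ p := Real.rpow_pos_of_pos hξ0 p
    rw [lt_div_iff₀ hξp] at h1
    linarith
  obtain ⟨δ, hδ0, hδ⟩ := mem_nhdsGT_iff_exists_Ioo_subset.mp hev2
  have hδ0' : (0:ℝ) < δ := hδ0
  set W := ∑ k ∈ Finset.Icc 1 T, |w k| with hW
  have hW0 : 0 ≤ W := Finset.sum_nonneg fun k _ => abs_nonneg _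
  set t := δ / (2*(W+1)) with ht
  have ht0 : 0 < t := by rw [ht]; positivity
  have htw : ∀ k ∈ Finset.Icc 1 T, t * |w k| < δ := by
    intro k hk
    have h1 : |w k| ≤ W := by
      rw [hW]; exact Finset.single_le_sum (f := fun j => |w j|) (fun j _ => abs_nonneg _) hk
    have h2 : t * |w k| ≤ t * W := mul_le_mul_of_nonneg_left h1 ht0.le
    have h3 : t * W < δ := by
      rw [ht, div_mul_eq_mul_div, div_lt_iff₀ (by positivity : (0:ℝ) < 2*(W+1))]
      nlinarith
    linarith
  set vν : Fin T → ℝ := fun i => t * |w ((i : ℕ) + 1)| with hvν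
  have huν : ∀ n, n ≤ T + 1 → extFun T vν n = t * |w n| := by
    intro n hn
    rcases Nat.eq_zero_or_pos n with h0 | h1
    · subst h0; rw [extFun_zero, hw0]; simp
    · rcases eq_or_lt_of_le hn with hT1 | hlt
      · rw [hT1, extFun_top, hwT]; simp
      · have hnT : n ≤ T := by omega
        rw [extFun_mem T vν n h1 hnT]
        show t * |w (n - 1 + 1)| = t * |w n|
        rw [show n - 1 + 1 = n by omega]
  have hJν : J vν < 0 := by
    have hnum : ∑ k ∈ Finset.Icc 1 (T+1), |extFun T vν k - extFun T vν (k-1)| ^ p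
        ≤ t ^ p * (lam * Dw) := by
      have hterm : ∀ k ∈ Finset.Icc 1 (T+1),
          |extFun T vν k - extFun T vν (k-1)| ^ p ≤ t ^ p * |w k - w (k-1)| ^ p := by
        intro k hk
        have hk' := Finset.mem_Icc.mp hk
        rw [huν k (by omega), huν (k-1) (by omega)]
        have e1 : abs (t * |w k| - t * |w (k-1)|) = t * abs (|w k| - |w (k-1)|) := by
          rw [← mul_sub, abs_mul, abs_of_pos ht0]
        rw [e1, Real.mul_rpow ht0.le (abs_nonneg _)]
        exact mul_le_mul_of_nonneg_left
          (Real.rpow_le_rpow (abs_nonneg _) (abs_abs_sub_abs_le_abs_sub _ _) hp0.le)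
          (Real.rpow_nonneg ht0.le p)
      calc ∑ k ∈ Finset.Icc 1 (T+1), |extFun T vν k - extFun T vν (k-1)| ^ p
          ≤ ∑ k ∈ Finset.Icc 1 (T+1), t ^ p * |w k - w (k-1)| ^ p :=
            Finset.sum_le_sum hterm
        _ = t ^ p * Nw := by rw [hNw, Finset.mul_sum]
        _ = t ^ p * (lam * Dw) := by rw [hNwD]
    have hden : (m - εγ) * (t ^ p * Dw) ≤ ∑ k ∈ Finset.Icc 1 T, G k (extFun T vν k) := by
      have hterm : ∀ k ∈ Finset.Icc 1 T,
          (m - εγ) * (t ^ p * |w k| ^ p) ≤ G k (extFun T vν k) := by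
        intro k hk
        have hk' := Finset.mem_Icc.mp hk
        rw [huν k (by omega)]
        rcases eq_or_ne (w k) 0 with hwk | hwk
        · rw [hwk]
          simp only [abs_zero, mul_zero]
          rw [hG0 k, Real.zero_rpow hpne, mul_zero, mul_zero]
        · have harg : 0 < t * |w k| := mul_pos ht0 (abs_pos.mpr hwk)
          rw [hGF k hk _ harg.le]
          have h1 := hδ ⟨harg, htw k hk⟩ k hk
          have h2 : (m - εγ) * (t ^ p * |w k| ^ p) ≤ (γ k - εγ) * ((t*|w k|) ^ p) := by
            rw [Real.mul_rpow ht0.le (abs_nonneg _)]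
            exact mul_le_mul_of_nonneg_right (by linarith [hm_le k hk])
              (mul_nonneg (Real.rpow_nonneg ht0.le p) (Real.rpow_nonneg (abs_nonneg _) p))
          linarith
      calc (m - εγ) * (t ^ p * Dw)
          = ∑ k ∈ Finset.Icc 1 T, (m - εγ) * (t ^ p * |w k| ^ p) := by
            rw [hDw, Finset.mul_sum, Finset.mul_sum]
        _ ≤ ∑ k ∈ Finset.Icc 1 T, G k (extFun T vν k) := Finset.sum_le_sum hterm
    have hJν_eq : J vν = (1/p) * (∑ k ∈ Finset.Icc 1 (T+1),
        |extFun T vν k - extFun T vν (k-1)| ^ p)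
        - α * (∑ k ∈ Finset.Icc 1 T, G k (extFun T vν k)) := by
      simp only [hJ]
      unfold ener
      rfl
    have e1 : (1/p) * (∑ k ∈ Finset.Icc 1 (T+1), |extFun T vν k - extFun T vν (k-1)| ^ p)
        ≤ (1/p) * (t ^ p * (lam * Dw)) :=
      mul_le_mul_of_nonneg_left hnum (by positivity)
    have e2 : α * ((m - εγ) * (t ^ p * Dw)) ≤
        α * (∑ k ∈ Finset.Icc 1 T, G k (extFun T vν k)) :=
      mul_le_mul_of_nonneg_left hden hα0.le
    have e3 : (1/p) * (t ^ p * (lam * Dw)) - α * ((m - εγ) * (t ^ p * Dw))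
        = (t ^ p * Dw) * (lam/p - α*(m - εγ)) := by field_simp
    have e4 : (t ^ p * Dw) * (lam/p - α*(m - εγ)) < 0 :=
      mul_neg_of_pos_of_neg (mul_pos (Real.rpow_pos_of_pos ht0 p) hDw_pos) hkey
    rw [hJν_eq]
    linarith
  have hmin_neg : J v₀ < 0 := lt_of_le_of_lt (hv₀ vν) hJν
  -- Euler–Lagrange equations
  set u := extFun T v₀ with hu
  have hEL : ∀ j ∈ Finset.Icc 1 T,
      |u j - u (j-1)| ^ (p-2) * (u j - u (j-1)) - |u (j+1) - u j| ^ (p-2) * (u (j+1) - u j)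
        = α * g j (u j) := by
    intro j hj
    have hj' := Finset.mem_Icc.mp hj
    apply ener_EL T p α hp g G hG' u j hj
    intro tp
    have hpert := extFun_perturb T v₀ j hj'.1 hj'.2 tp
    rw [← hpert]
    exact hv₀ _
  -- differences are non-increasing
  have hd : ∀ k, 1 ≤ k → k ≤ T → u (k+1) - u k ≤ u k - u (k-1) := by
    intro k h1 h2
    have hk : k ∈ Finset.Icc 1 T := Finset.mem_Icc.mpr ⟨h1, h2⟩
    have hel := hEL k hk
    have hg0 : 0 ≤ α * g k (u k) := mul_nonneg hα0.le (hgnn k hk _)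
    have hφle : |u (k+1) - u k| ^ (p-2) * (u (k+1) - u k)
        ≤ |u k - u (k-1)| ^ (p-2) * (u k - u (k-1)) := by linarith
    exact (strictMono_phiAux hp).le_iff_le.mp hφle
  -- the minimizer is not identically zero
  have hune : ¬ (∀ n, n ≤ T+1 → u n = 0) := by
    intro hall
    have hz : ener T p α G u = 0 := by
      have h1 : ∑ k ∈ Finset.Icc 1 (T+1), |u k - u (k-1)| ^ p = 0 := by
        apply Finset.sum_eq_zero
        intro k hk
        have hk' := Finset.mem_Icc.mp hk
        rw [hall k (by omega), hall (k-1) (by omega)]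
        simp [Real.zero_rpow hpne]
      have h2 : ∑ k ∈ Finset.Icc 1 T, G k (u k) = 0 := by
        apply Finset.sum_eq_zero
        intro k hk
        have hk' := Finset.mem_Icc.mp hk
        rw [hall k (by omega)]
        exact hG0 k
      unfold ener
      rw [h1, h2]
      simp
    have hJv0 : J v₀ = ener T p α G u := by simp only [hJ, hu]
    rw [hJv0, hz] at hmin_neg
    exact lt_irrefl 0 hmin_neg
  have hpos := positivity_of_concave T u (extFun_zero T v₀) (extFun_top T v₀) hd hune
  -- conclusion
  refine ⟨u, extFun_zero T v₀, extFun_top T v₀, ?_, ?_⟩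
  · intro k hk
    have hk' := Finset.mem_Icc.mp hk
    exact hpos k hk'.1 hk'.2
  · intro k hk
    have hk' := Finset.mem_Icc.mp hk
    have h1 := hEL k hk
    have h2 : g k (u k) = f k (u k) := by
      simp only [hgdef]
      rw [max_eq_left (hpos k hk'.1 hk'.2).le]
    rw [h2] at h1
    rw [hφ (u (k + 1) - u k), hφ (u k - u (k - 1))]
    linarith
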